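/- Let E be a finite linearly ordered set, σ a bijection from {1,...,n} to E (n = |E|), and let i < j be two descents of σ. Define S(σ,k) = { σ(l) : l ≥ k, σ(l) ≤ σ(k) }. Then S(σ,i) is an initial segment of S(σ,i) ∪ S(σ,j), i.e. every element of S(σ,i) ∪ S(σ,j) that is ≤ max S(σ,i) belongs to S(σ,i). -/
import Mathlib


/-- `S(σ, i) = { σ l : l ≥ i, σ l ≤ σ i }` as a Finset. -/
def sSet {E : Type*} [LinearOrder E] {n : ℕ} (σ : Fin n → E) (i : Fin n) : Finset E :=
  Finset.image σ (Finset.univ.filter (fun l => i ≤ l ∧ σ l ≤ σ i))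

/-- If `i < j` are two descents of a bijection `σ : Fin n → E` (`E` a finite linear
order), then `σ i` is the maximum of `S(σ,i)` and `S(σ,i)` is an initial segment of
`S(σ,i) ∪ S(σ,j)`: every element of the union that is `≤ max S(σ,i)` lies in `S(σ,i)`. -/
theorem stmt4 {E : Type*} [Fintype E] [LinearOrder E] {n : ℕ}
    (σ : Fin n → E) (hσ : Function.Bijective σ) (i j : Fin n) (hij : i < j)
    (hi : (i : ℕ) + 1 < n) (hj : (j : ℕ) + 1 < n)
    (hdi : σ ⟨(i : ℕ) + 1, hi⟩ < σ i) (hdj : σ ⟨(j : ℕ) + 1, hj⟩ < σ j) :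
    σ i ∈ sSet σ i ∧ (∀ x ∈ sSet σ i, x ≤ σ i) ∧
    ∀ x ∈ sSet σ i ∪ sSet σ j, x ≤ σ i → x ∈ sSet σ i := by
  refine ⟨?_, ?_, ?_⟩
  · simp only [sSet, Finset.mem_image, Finset.mem_filter]
    exact ⟨i, ⟨Finset.mem_univ _, le_refl i, le_refl _⟩, rfl⟩
  · intro x hx
    simp only [sSet, Finset.mem_image, Finset.mem_filter] at hx
    obtain ⟨l, ⟨_, _, h⟩, rfl⟩ := hx
    exact h
  · intro x hx hle
    rcases Finset.mem_union.mp hx with h | h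
    · exact h
    · simp only [sSet, Finset.mem_image, Finset.mem_filter] at h ⊢
      obtain ⟨l, ⟨_, hl, _⟩, rfl⟩ := h
      exact ⟨l, ⟨Finset.mem_univ _, le_trans hij.le hl, hle⟩, rfl⟩
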